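/- Let T be a symmetric bilinear form on an n-dimensional Lorentzian vector space whose metric square satisfies T² = g (i.e., the associated endomorphism squares to the identity) and which has the dominant property up to sign. Then the trace of T (with respect to g) satisfies tr T = ±(2p - n) for some integer p with 1 ≤ p ≤ n, corresponding to T being ± the superenergy tensor of a simple p-form. -/

import Mathlib

open scoped BigOperators

noncomputable section

/-- Minkowski metric on `Fin n → ℝ`, mostly-plus signature (1, n-1). -/
def mink (n : ℕ) [NeZero n] (u v : Fin n → ℝ) : ℝ :=
  ∑ i : Fin n, (if i = 0 then (-1 : ℝ) else 1) * u i * v i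

/-- Future-pointing causal vector: nonpositive norm, in the closed future half-cone. -/
def FutureCausal (n : ℕ) [NeZero n] (u : Fin n → ℝ) : Prop :=
  mink n u u ≤ 0 ∧ 0 ≤ u 0

/-- Metric square of a bilinear form:
`T²(x,y) = Σ_α η(α) T(x,e_α) T(e_α,y)` (index raising, mostly-plus signs). -/
def bilinSq (n : ℕ) [NeZero n] (T : (Fin n → ℝ) →ₗ[ℝ] (Fin n → ℝ) →ₗ[ℝ] ℝ)
    (x y : Fin n → ℝ) : ℝ :=
  ∑ α : Fin n, (if α = 0 then (-1 : ℝ) else 1) * T x (Pi.single α 1) * T (Pi.single α 1) y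

/-- Trace of a bilinear form with respect to the Minkowski metric. -/
def bilinTr (n : ℕ) [NeZero n] (T : (Fin n → ℝ) →ₗ[ℝ] (Fin n → ℝ) →ₗ[ℝ] ℝ) : ℝ :=
  ∑ α : Fin n, (if α = 0 then (-1 : ℝ) else 1) * T (Pi.single α 1) (Pi.single α 1)

/-- If a symmetric bilinear form satisfies `T² = g` and has the dominant
property up to sign, then `tr T = ±(2p - n)` for some integer `1 ≤ p ≤ n`,
corresponding to `T` being `±` the superenergy tensor of a simple `p`-form. -/
theorem stmt_11 (n : ℕ) [NeZero n]
    (T : (Fin n → ℝ) →ₗ[ℝ] (Fin n → ℝ) →ₗ[ℝ] ℝ)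
    (hsym : ∀ x y, T x y = T y x)
    (hsq : ∀ x y : Fin n → ℝ, bilinSq n T x y = mink n x y)
    (hDP : (∀ u v, FutureCausal n u → FutureCausal n v → 0 ≤ T u v) ∨
           (∀ u v, FutureCausal n u → FutureCausal n v → T u v ≤ 0)) :
    ∃ p : ℕ, 1 ≤ p ∧ p ≤ n ∧
      (bilinTr n T = 2 * (p : ℝ) - n ∨ bilinTr n T = -(2 * (p : ℝ) - n)) := by
  classical
  set d : Fin n → ℝ := fun i => if i = 0 then (-1 : ℝ) else 1 with hd
  set e : Fin n → (Fin n → ℝ) := fun α => Pi.single α 1 with he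
  -- the matrix of t = η⁻¹ T
  set M : Matrix (Fin n) (Fin n) ℝ := fun α β => d α * T (e α) (e β) with hM
  have hd2 : ∀ i, d i * d i = 1 := by
    intro i; by_cases h : i = 0 <;> simp [hd, h]
  -- mink on basis vectors
  have hmink : ∀ β γ, mink n (e β) (e γ) = if β = γ then d β else 0 := by
    intro β γ
    simp only [mink, he]
    rw [Finset.sum_eq_single β]
    · by_cases h : β = γ <;> simp [Pi.single_apply, h, hd]
    · intro i _ hi; simp [Pi.single_apply, hi]
    · simp
  -- M * M = 1
  have hMM : M * M = 1 := by
    ext β γ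
    have h1 := hsq (e β) (e γ)
    simp only [bilinSq] at h1
    rw [hmink] at h1
    have : ∀ α, M β α * M α γ = d β * ((if α = 0 then (-1:ℝ) else 1) * T (e β) (Pi.single α 1) * T (Pi.single α 1) (e γ)) := by
      intro α
      simp only [hM, hd, he]
      ring
    simp only [Matrix.mul_apply, this, ← Finset.mul_sum, h1]
    by_cases h : β = γ
    · simp [h, Matrix.one_apply, hd2]
    · simp [h, Matrix.one_apply]
  set f : (Fin n → ℝ) →ₗ[ℝ] (Fin n → ℝ) := Matrix.toLin' M with hf
  have hff : f ∘ₗ f = LinearMap.id := by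
    rw [hf, ← Matrix.toLin'_mul, hMM, Matrix.toLin'_one]
  have hffx : ∀ x, f (f x) = x := fun x => by
    simpa using LinearMap.ext_iff.mp hff x
  -- projection P = (1/2)(id + f)
  set P : (Fin n → ℝ) →ₗ[ℝ] (Fin n → ℝ) := (1/2 : ℝ) • (LinearMap.id + f) with hP
  have hPx : ∀ x, P x = (1/2 : ℝ) • (x + f x) := by intro x; simp [hP]
  have hPP : P ∘ₗ P = P := by
    apply LinearMap.ext; intro x
    have h1 : f (P x) = P x := by
      rw [hPx, map_smul, map_add, hffx, add_comm]
    simp only [LinearMap.comp_apply]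
    rw [hPx (P x), h1, hPx x]
    module
  obtain ⟨p, hproj⟩ := (LinearMap.isProj_iff_isIdempotentElem P).mpr hPP
  have htrP : LinearMap.trace ℝ _ P = (Module.finrank ℝ p : ℝ) := hproj.trace
  have hrank : Module.finrank ℝ p ≤ n := by
    have := Submodule.finrank_le p
    simpa using this
  -- trace f = bilinTr
  have htrf : LinearMap.trace ℝ _ f = bilinTr n T := by
    rw [hf, LinearMap.trace_eq_matrix_trace ℝ (Pi.basisFun ℝ (Fin n)),
      LinearMap.toMatrix_eq_toMatrix', LinearMap.toMatrix'_toLin']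
    simp only [Matrix.trace, Matrix.diag, hM, bilinTr, hd, he]
  have htrace : bilinTr n T = 2 * (Module.finrank ℝ p : ℝ) - n := by
    have h2 : LinearMap.trace ℝ _ P = (1/2 : ℝ) * ((n : ℝ) + bilinTr n T) := by
      rw [hP, map_smul, map_add, LinearMap.trace_id, htrf]
      simp [Module.finrank_pi]
    rw [htrP] at h2
    linarith
  rcases Nat.eq_zero_or_pos (Module.finrank ℝ p) with h0 | h1
  · refine ⟨n, Nat.one_le_iff_ne_zero.mpr (NeZero.ne n), le_refl n, Or.inr ?_⟩
    rw [htrace, h0]; push_cast; ring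
  · exact ⟨Module.finrank ℝ p, h1, hrank, Or.inl htrace⟩
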